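/- Let X₁ and X₂ be independent nonnegative random variables. Suppose P(X₁ > x) = Θ(x^{-θ}) as x → ∞ for some θ > 0, and E[X₂^θ] < ∞ with X₂ > 0 almost surely. Then P(X₁·X₂ > x) = Θ(x^{-θ}) as x → ∞. -/

import Mathlib

open MeasureTheory ProbabilityTheory Filter Asymptotics

/-- If `P(X₁ > x) = Θ(x^{-θ})`, `E[X₂^θ] < ∞` and `X₂ > 0` a.s., with `X₁, X₂`
independent and nonnegative, then `P(X₁X₂ > x) = Θ(x^{-θ})`. -/
theorem stmt5 {Ω : Type*} [MeasureSpace Ω] [IsProbabilityMeasure (ℙ : Measure Ω)]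
    (X₁ X₂ : Ω → ℝ) (hm₁ : Measurable X₁) (hm₂ : Measurable X₂)
    (h₁ : ∀ ω, 0 ≤ X₁ ω) (h₂ : ∀ ω, 0 ≤ X₂ ω)
    (hindep : IndepFun X₁ X₂ ℙ)
    (θ : ℝ) (hθ : 0 < θ)
    (hΘ : (fun x : ℝ => (ℙ {ω | X₁ ω > x}).toReal) =Θ[atTop] fun x : ℝ => x ^ (-θ))
    (hmom : ∫⁻ ω, ENNReal.ofReal (X₂ ω ^ θ) < ⊤)
    (hpos : ∀ᵐ ω ∂ℙ, 0 < X₂ ω) :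
    (fun x : ℝ => (ℙ {ω | X₁ ω * X₂ ω > x}).toReal) =Θ[atTop] fun x : ℝ => x ^ (-θ) := by
  -- extract upper constant
  obtain ⟨C, hCpos, hCO⟩ := hΘ.1.exists_pos
  have hCb : ∀ᶠ x : ℝ in atTop, (ℙ {ω | X₁ ω > x}).toReal ≤ C * x ^ (-θ) := by
    filter_upwards [hCO.bound, eventually_gt_atTop (0:ℝ)] with x hx hx0
    rwa [Real.norm_eq_abs, Real.norm_eq_abs, abs_of_nonneg ENNReal.toReal_nonneg,
      abs_of_nonneg (Real.rpow_nonneg hx0.le _)] at hx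
  obtain ⟨x₀, hx₀⟩ := eventually_atTop.mp hCb
  -- extract lower constant
  obtain ⟨c, hcpos, hcO⟩ := hΘ.2.exists_pos
  have hcb : ∀ᶠ x : ℝ in atTop, x ^ (-θ) ≤ c * (ℙ {ω | X₁ ω > x}).toReal := by
    filter_upwards [hcO.bound, eventually_gt_atTop (0:ℝ)] with x hx hx0
    rwa [Real.norm_eq_abs, Real.norm_eq_abs, abs_of_nonneg ENNReal.toReal_nonneg,
      abs_of_nonneg (Real.rpow_nonneg hx0.le _)] at hx
  obtain ⟨x₁, hx₁⟩ := eventually_atTop.mp hcb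
  set b : ℝ := max x₀ 1 with hb
  have hbpos : (0:ℝ) < b := lt_of_lt_of_le one_pos (le_max_right _ _)
  set y : ℝ := max x₁ 1 with hy
  have hypos : (0:ℝ) < y := lt_of_lt_of_le one_pos (le_max_right _ _)
  -- find a level a > 0 with P(X₂ ≥ a) > 0
  have hexa : ∃ a : ℝ, 0 < a ∧ ℙ {ω | a ≤ X₂ ω} ≠ 0 := by
    by_contra hcon
    push_neg at hcon
    have hnull : ℙ {ω | 0 < X₂ ω} = 0 := by
      refine measure_mono_null (fun ω hω => ?_)
        (measure_iUnion_null fun n : ℕ => hcon (1/(n+1)) (by positivity))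
      obtain ⟨n, hn⟩ := exists_nat_one_div_lt (show (0:ℝ) < X₂ ω from hω)
      exact Set.mem_iUnion.2 ⟨n, hn.le⟩
    have h0 : ℙ {ω | ¬ 0 < X₂ ω} = 0 := ae_iff.mp hpos
    have hms : MeasurableSet {ω | 0 < X₂ ω} := measurableSet_lt measurable_const hm₂
    have := measure_add_measure_compl (μ := ℙ) hms
    rw [Set.compl_setOf, hnull, h0, measure_univ] at this
    simp at this
  obtain ⟨a, hapos, hpne⟩ := hexa
  set p : ENNReal := ℙ {ω | a ≤ X₂ ω} with hp
  have hpne_top : p ≠ ⊤ := measure_ne_top _ _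
  have hptr : 0 < p.toReal := ENNReal.toReal_pos hpne hpne_top
  constructor
  · -- upper bound: f =O x^{-θ}
    set M : ENNReal := ∫⁻ ω, ENNReal.ofReal (X₂ ω ^ θ) with hM
    have hMne : M ≠ ⊤ := hmom.ne
    have hmap : Measure.map (fun ω => (X₁ ω, X₂ ω)) ℙ = (Measure.map X₁ ℙ).prod (Measure.map X₂ ℙ) :=
      (indepFun_iff_map_prod_eq_prod_map_map hm₁.aemeasurable hm₂.aemeasurable).mp hindep
    have hrep : ∀ x : ℝ, ℙ {ω | X₁ ω * X₂ ω > x}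
        = ∫⁻ t, ℙ {ω | X₁ ω * t > x} ∂(Measure.map X₂ ℙ) := by
      intro x
      have hS : MeasurableSet {p : ℝ × ℝ | p.1 * p.2 > x} :=
        measurableSet_lt measurable_const (measurable_fst.mul measurable_snd)
      have e1 : ℙ {ω | X₁ ω * X₂ ω > x}
          = Measure.map (fun ω => (X₁ ω, X₂ ω)) ℙ {p : ℝ × ℝ | p.1 * p.2 > x} := by
        rw [Measure.map_apply (hm₁.prodMk hm₂) hS]; rfl
      rw [e1, hmap, Measure.prod_apply_symm hS]
      refine lintegral_congr fun t => ?_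
      have : ((fun s : ℝ => (s, t)) ⁻¹' {p : ℝ × ℝ | p.1 * p.2 > x}) = {s : ℝ | s * t > x} := rfl
      have hms : MeasurableSet {s : ℝ | s * t > x} := by
        have hmul : Measurable fun s : ℝ => s * t := by fun_prop
        exact measurableSet_lt measurable_const hmul
      rw [this, Measure.map_apply hm₁ hms]
      rfl
    have hmomap : ∫⁻ t, ENNReal.ofReal (t ^ θ) ∂(Measure.map X₂ ℙ) = M := by
      rw [lintegral_map (by fun_prop) hm₂]
    have haet : ∀ᵐ t ∂(Measure.map X₂ ℙ), 0 < t :=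
      (ae_map_iff hm₂.aemeasurable (measurableSet_lt measurable_const measurable_id)).2 hpos
    rw [isBigO_iff]
    refine ⟨C * M.toReal + M.toReal * b ^ θ, ?_⟩
    filter_upwards [eventually_ge_atTop b, eventually_gt_atTop (0:ℝ)] with x hxb hx0
    have hxbpos : 0 < x / b := div_pos hx0 hbpos
    -- pointwise bound
    have hpt : ∀ᵐ t ∂(Measure.map X₂ ℙ), ℙ {ω | X₁ ω * t > x}
        ≤ ENNReal.ofReal (C * x ^ (-θ) * t ^ θ)
          + (Set.Ioi (x / b)).indicator (1 : ℝ → ENNReal) t := by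
      filter_upwards [haet] with t ht
      have hset : {ω | X₁ ω * t > x} = {ω | X₁ ω > x / t} := by
        ext ω; simp only [Set.mem_setOf_eq, gt_iff_lt, div_lt_iff₀ ht]
      rw [hset]
      by_cases hcase : b ≤ x / t
      · -- use tail bound
        have htail : (ℙ {ω | X₁ ω > x / t}).toReal ≤ C * (x / t) ^ (-θ) :=
          hx₀ (x / t) (le_trans (le_max_left _ _) hcase)
        have heq : (x / t) ^ (-θ) = x ^ (-θ) * t ^ θ := by
          rw [div_eq_mul_inv, Real.mul_rpow hx0.le (inv_nonneg.2 ht.le),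
            Real.inv_rpow ht.le, Real.rpow_neg ht.le, inv_inv]
        have : ℙ {ω | X₁ ω > x / t} ≤ ENNReal.ofReal (C * x ^ (-θ) * t ^ θ) := by
          rw [← ENNReal.ofReal_toReal (measure_ne_top ℙ {ω | X₁ ω > x / t})]
          apply ENNReal.ofReal_le_ofReal
          calc (ℙ {ω | X₁ ω > x / t}).toReal ≤ C * (x / t) ^ (-θ) := htail
            _ = C * x ^ (-θ) * t ^ θ := by rw [heq, mul_assoc]
        exact le_trans this le_self_add
      · -- t is large
        push_neg at hcase
        have htmem : t ∈ Set.Ioi (x / b) := by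
          simp only [Set.mem_Ioi]
          rw [div_lt_iff₀ hbpos, mul_comm]
          exact (div_lt_iff₀ ht).mp hcase
        have : (Set.Ioi (x / b)).indicator (1 : ℝ → ENNReal) t = 1 :=
          Set.indicator_of_mem htmem 1
        calc ℙ {ω | X₁ ω > x / t} ≤ 1 := prob_le_one
          _ = (Set.Ioi (x / b)).indicator (1 : ℝ → ENNReal) t := this.symm
          _ ≤ _ := le_add_self
    have hint : ℙ {ω | X₁ ω * X₂ ω > x}
        ≤ ENNReal.ofReal (C * x ^ (-θ)) * M + (Measure.map X₂ ℙ) (Set.Ioi (x / b)) := by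
      rw [hrep x]
      calc ∫⁻ t, ℙ {ω | X₁ ω * t > x} ∂(Measure.map X₂ ℙ)
          ≤ ∫⁻ t, (ENNReal.ofReal (C * x ^ (-θ) * t ^ θ)
            + (Set.Ioi (x / b)).indicator (1 : ℝ → ENNReal) t) ∂(Measure.map X₂ ℙ) :=
            lintegral_mono_ae hpt
        _ = (∫⁻ t, ENNReal.ofReal (C * x ^ (-θ) * t ^ θ) ∂(Measure.map X₂ ℙ))
            + (Measure.map X₂ ℙ) (Set.Ioi (x / b)) := by
            rw [lintegral_add_left (by fun_prop), lintegral_indicator_one measurableSet_Ioi]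
        _ = ENNReal.ofReal (C * x ^ (-θ)) * M + (Measure.map X₂ ℙ) (Set.Ioi (x / b)) := by
            congr 1
            rw [← hmomap, ← lintegral_const_mul _ (by fun_prop)]
            refine lintegral_congr fun t => ?_
            rw [← ENNReal.ofReal_mul (by positivity)]
    -- Chebyshev for the tail of X₂
    have hcheb : (Measure.map X₂ ℙ) (Set.Ioi (x / b)) ≤ M / ENNReal.ofReal ((x / b) ^ θ) := by
      have hne0 : ENNReal.ofReal ((x / b) ^ θ) ≠ 0 := by
        simp [ENNReal.ofReal_eq_zero, not_le]
        positivity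
      rw [ENNReal.le_div_iff_mul_le (Or.inl hne0) (Or.inl ENNReal.ofReal_ne_top), mul_comm]
      calc ENNReal.ofReal ((x / b) ^ θ) * (Measure.map X₂ ℙ) (Set.Ioi (x / b))
          ≤ ENNReal.ofReal ((x / b) ^ θ)
            * (Measure.map X₂ ℙ) {t | ENNReal.ofReal ((x / b) ^ θ) ≤ ENNReal.ofReal (t ^ θ)} := by
            gcongr
            intro t ht
            simp only [Set.mem_Ioi] at ht
            exact ENNReal.ofReal_le_ofReal
              (Real.rpow_le_rpow hxbpos.le ht.le hθ.le)
        _ ≤ ∫⁻ t, ENNReal.ofReal (t ^ θ) ∂(Measure.map X₂ ℙ) :=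
            mul_meas_ge_le_lintegral₀ (by fun_prop) _
        _ = M := hmomap
    have htot : ℙ {ω | X₁ ω * X₂ ω > x}
        ≤ ENNReal.ofReal (C * x ^ (-θ)) * M + M / ENNReal.ofReal ((x / b) ^ θ) :=
      le_trans hint (by gcongr)
    have hne0' : ENNReal.ofReal ((x / b) ^ θ) ≠ 0 := by
      simp [ENNReal.ofReal_eq_zero, not_le]; positivity
    have hRHSne : ENNReal.ofReal (C * x ^ (-θ)) * M + M / ENNReal.ofReal ((x / b) ^ θ) ≠ ⊤ := by
      apply ENNReal.add_ne_top.2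
      constructor
      · exact ENNReal.mul_ne_top ENNReal.ofReal_ne_top hMne
      · exact (ENNReal.div_lt_top hMne hne0').ne
    have hfinal : (ℙ {ω | X₁ ω * X₂ ω > x}).toReal
        ≤ C * x ^ (-θ) * M.toReal + M.toReal / (x / b) ^ θ := by
      have := ENNReal.toReal_mono hRHSne htot
      rwa [ENNReal.toReal_add (ENNReal.mul_ne_top ENNReal.ofReal_ne_top hMne)
          (ENNReal.div_lt_top hMne hne0').ne, ENNReal.toReal_mul, ENNReal.toReal_div,
        ENNReal.toReal_ofReal (by positivity), ENNReal.toReal_ofReal (by positivity)] at this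
    rw [Real.norm_eq_abs, Real.norm_eq_abs, abs_of_nonneg ENNReal.toReal_nonneg,
      abs_of_nonneg (Real.rpow_nonneg hx0.le _)]
    refine le_trans hfinal ?_
    have halg : M.toReal / (x / b) ^ θ = M.toReal * b ^ θ * x ^ (-θ) := by
      rw [Real.div_rpow hx0.le hbpos.le, div_div_eq_mul_div, Real.rpow_neg hx0.le,
        div_eq_mul_inv]
    rw [halg]; ring_nf; rfl
  · -- lower bound: x^{-θ} =O f
    rw [isBigO_iff]
    refine ⟨a ^ (-θ) * c / p.toReal, ?_⟩
    filter_upwards [eventually_ge_atTop (a * y), eventually_gt_atTop (0:ℝ)] with x hxy hx0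
    have hxa : y ≤ x / a := (le_div_iff₀ hapos).2 (by linarith [mul_comm a y])
    have hxapos : 0 < x / a := lt_of_lt_of_le hypos hxa
    -- event inclusion
    have hincl : (X₁ ⁻¹' Set.Ioi (x / a)) ∩ (X₂ ⁻¹' Set.Ici a) ⊆ {ω | X₁ ω * X₂ ω > x} := by
      rintro ω ⟨hω1, hω2⟩
      simp only [Set.mem_preimage, Set.mem_Ioi, Set.mem_Ici] at hω1 hω2
      calc x = (x / a) * a := (div_mul_cancel₀ x hapos.ne').symm
        _ < X₁ ω * a := by
            exact mul_lt_mul_of_pos_right hω1 hapos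
        _ ≤ X₁ ω * X₂ ω := mul_le_mul_of_nonneg_left hω2 (h₁ ω)
    have hprod : ℙ ((X₁ ⁻¹' Set.Ioi (x / a)) ∩ (X₂ ⁻¹' Set.Ici a))
        = ℙ (X₁ ⁻¹' Set.Ioi (x / a)) * p :=
      hindep.measure_inter_preimage_eq_mul _ _ measurableSet_Ioi measurableSet_Ici
    have hmle : ℙ (X₁ ⁻¹' Set.Ioi (x / a)) * p ≤ ℙ {ω | X₁ ω * X₂ ω > x} := by
      rw [← hprod]; exact measure_mono hincl
    have hq : ℙ (X₁ ⁻¹' Set.Ioi (x / a)) = ℙ {ω | X₁ ω > x / a} := rfl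
    have htr : (ℙ {ω | X₁ ω > x / a}).toReal * p.toReal
        ≤ (ℙ {ω | X₁ ω * X₂ ω > x}).toReal := by
      have := ENNReal.toReal_mono (measure_ne_top ℙ _) hmle
      rwa [hq, ENNReal.toReal_mul] at this
    have hlow : (x / a) ^ (-θ) ≤ c * (ℙ {ω | X₁ ω > x / a}).toReal :=
      hx₁ (x / a) (le_trans (le_max_left _ _) hxa)
    rw [Real.norm_eq_abs, Real.norm_eq_abs, abs_of_nonneg (Real.rpow_nonneg hx0.le _),
      abs_of_nonneg ENNReal.toReal_nonneg]
    have hxsplit : x ^ (-θ) = a ^ (-θ) * (x / a) ^ (-θ) := by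
      rw [← Real.mul_rpow hapos.le hxapos.le, mul_div_cancel₀ x hapos.ne']
    calc x ^ (-θ) = a ^ (-θ) * (x / a) ^ (-θ) := hxsplit
      _ ≤ a ^ (-θ) * (c * (ℙ {ω | X₁ ω > x / a}).toReal) := by
          exact mul_le_mul_of_nonneg_left hlow (Real.rpow_nonneg hapos.le _)
      _ = (a ^ (-θ) * c / p.toReal) * ((ℙ {ω | X₁ ω > x / a}).toReal * p.toReal) := by
          field_simp
      _ ≤ (a ^ (-θ) * c / p.toReal) * (ℙ {ω | X₁ ω * X₂ ω > x}).toReal := by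
          apply mul_le_mul_of_nonneg_left htr
          positivity
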